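/- arXiv:2005.12011 — 3 statements merged into one kernel-verified Lean document; each statement's English description precedes it below -/
import Mathlib

section
/- (Zarankiewicz/Reiman-type incidence bound) Let P be a finite set of points and L a finite set of lines in an incidence structure where any two distinct points lie on at most one common line (equivalently, any two distinct lines share at most one common point). Then the number of incidences satisfies I(P, L) ≤ |P|·√|L| + |L| and also I(P, L) ≤ |L|·√|P| + |P|. -/
private lemma solve_quad {I p l : ℝ} (hI : 0 ≤ I) (hp : 0 ≤ p) (hl : 0 ≤ l)
    (h : I ^ 2 ≤ l * I + l * p ^ 2) : I ≤ p * Real.sqrt l + l := by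
  by_contra hc
  push_neg at hc
  have hs : Real.sqrt l ^ 2 = l := Real.sq_sqrt hl
  have hs0 : 0 ≤ Real.sqrt l := Real.sqrt_nonneg l
  nlinarith [mul_nonneg hp hs0, mul_nonneg (mul_nonneg hp hs0) hI,
    sq_nonneg (I - p * Real.sqrt l - l)]

private lemma key_incidence {P L : Type*} (r : P → L → Prop)
    (hlin : ∀ p q : P, p ≠ q → ∀ l l' : L,
      r p l → r q l → r p l' → r q l' → l = l')
    (Ps : Finset P) (Ls : Finset L) :
    (({pq : P × L | pq.1 ∈ Ps ∧ pq.2 ∈ Ls ∧ r pq.1 pq.2}.ncard : ℝ) ≤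
        Ps.card * Real.sqrt Ls.card + Ls.card) := by
  classical
  have hset : {pq : P × L | pq.1 ∈ Ps ∧ pq.2 ∈ Ls ∧ r pq.1 pq.2}
      = ↑((Ps ×ˢ Ls).filter (fun pq => r pq.1 pq.2)) := by
    ext ⟨p, l⟩
    simp [and_assoc]
  rw [hset, Set.ncard_coe_finset]
  set e : L → ℕ := fun l => (Ps.filter (fun p => r p l)).card with he
  set I : ℕ := ((Ps ×ˢ Ls).filter (fun pq => r pq.1 pq.2)).card with hIdef
  have hI : I = ∑ l ∈ Ls, e l := by
    rw [hIdef, Finset.card_filter, Finset.sum_product, Finset.sum_comm]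
    refine Finset.sum_congr rfl fun l _ => ?_
    exact (Finset.card_filter _ _).symm
  -- T : triples (l, (p,q)) with p,q on l
  set T : Finset (L × (P × P)) :=
    (Ls ×ˢ (Ps ×ˢ Ps)).filter (fun x => r x.2.1 x.1 ∧ r x.2.2 x.1) with hT
  have hTcard : T.card = ∑ l ∈ Ls, e l * e l := by
    rw [hT, Finset.card_filter, Finset.sum_product]
    refine Finset.sum_congr rfl fun l _ => ?_
    have hfp : ((Ps ×ˢ Ps).filter (fun pq : P × P => r pq.1 l ∧ r pq.2 l))
        = (Ps.filter (fun p => r p l)) ×ˢ (Ps.filter (fun p => r p l)) := by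
      ext ⟨p, q⟩
      simp only [Finset.mem_filter, Finset.mem_product]
      tauto
    have : ((Ps ×ˢ Ps).filter (fun pq : P × P => r pq.1 l ∧ r pq.2 l)).card
        = e l * e l := by rw [hfp, Finset.card_product, he]
    rw [← this, Finset.card_filter]
  -- split T into diagonal and off-diagonal
  have hsplit : (T.filter (fun x => x.2.1 = x.2.2)).card
      + (T.filter (fun x => ¬ x.2.1 = x.2.2)).card = T.card :=
    Finset.card_filter_add_card_filter_not _
  -- diagonal part ≤ I
  have hdiag : (T.filter (fun x => x.2.1 = x.2.2)).card ≤ I := by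
    rw [hIdef]
    apply Finset.card_le_card_of_injOn (fun x => (x.2.1, x.1))
    · intro x hx
      simp only [hT, Finset.mem_coe, Finset.mem_filter, Finset.mem_product] at hx ⊢
      exact ⟨⟨hx.1.1.2.1, hx.1.1.1⟩, hx.1.2.1⟩
    · intro x hx y hy hxy
      simp only [Finset.coe_filter, Set.mem_setOf_eq] at hx hy
      replace hxy : (x.2.1, x.1) = (y.2.1, y.1) := hxy
      have hdx : x.2.1 = x.2.2 := hx.2
      have hdy : y.2.1 = y.2.2 := hy.2
      injection hxy with h1 h2
      refine Prod.ext h2 (Prod.ext h1 ?_)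
      rw [← hdx, ← hdy]; exact h1
  -- off-diagonal part ≤ |P|^2
  have hoff : (T.filter (fun x => ¬ x.2.1 = x.2.2)).card ≤ Ps.card * Ps.card := by
    rw [← Finset.card_product]
    apply Finset.card_le_card_of_injOn (fun x => x.2)
    · intro x hx
      simp only [hT, Finset.mem_coe, Finset.mem_filter, Finset.mem_product] at hx ⊢
      exact hx.1.1.2
    · intro x hx y hy hxy
      simp only [Finset.coe_filter, hT, Finset.mem_filter, Finset.mem_product,
        Set.mem_setOf_eq] at hx hy
      replace hxy : x.2 = y.2 := hxy
      obtain ⟨⟨-, hrx1, hrx2⟩, hne⟩ := hx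
      obtain ⟨⟨-, hry1, hry2⟩, -⟩ := hy
      have hl : x.1 = y.1 := by
        apply hlin x.2.1 x.2.2 hne x.1 y.1 hrx1 hrx2
        · rw [hxy]; exact hry1
        · rw [hxy]; exact hry2
      exact Prod.ext hl hxy
  -- combine: ∑ e l ^2 ≤ I + |P|^2
  have hsum : ∑ l ∈ Ls, e l * e l ≤ I + Ps.card * Ps.card := by
    rw [← hTcard, ← hsplit]
    omega
  -- Cauchy–Schwarz in ℝ
  have hcs : ((I : ℝ)) ^ 2 ≤ (Ls.card : ℝ) * ∑ l ∈ Ls, (e l : ℝ) ^ 2 := by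
    rw [hI]
    push_cast
    exact sq_sum_le_card_mul_sum_sq
  have hsum' : (∑ l ∈ Ls, (e l : ℝ) ^ 2) ≤ (I : ℝ) + (Ps.card : ℝ) ^ 2 := by
    have h := (Nat.cast_le (α := ℝ)).mpr hsum
    push_cast at h
    simpa [pow_two] using h
  have hfin : (I : ℝ) ^ 2 ≤ (Ls.card : ℝ) * I + (Ls.card : ℝ) * (Ps.card : ℝ) ^ 2 := by
    calc (I : ℝ) ^ 2 ≤ (Ls.card : ℝ) * ∑ l ∈ Ls, (e l : ℝ) ^ 2 := hcs
    _ ≤ (Ls.card : ℝ) * ((I : ℝ) + (Ps.card : ℝ) ^ 2) :=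
        mul_le_mul_of_nonneg_left hsum' (by positivity)
    _ = (Ls.card : ℝ) * I + (Ls.card : ℝ) * (Ps.card : ℝ) ^ 2 := by ring
  exact solve_quad (by positivity) (by positivity) (by positivity) hfin

theorem stmt_11 (P L : Type*) (r : P → L → Prop)
    (hlin : ∀ p q : P, p ≠ q → ∀ l l' : L,
      r p l → r q l → r p l' → r q l' → l = l')
    (Ps : Finset P) (Ls : Finset L) :
    (({pq : P × L | pq.1 ∈ Ps ∧ pq.2 ∈ Ls ∧ r pq.1 pq.2}.ncard : ℝ) ≤
        Ps.card * Real.sqrt Ls.card + Ls.card) ∧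
    (({pq : P × L | pq.1 ∈ Ps ∧ pq.2 ∈ Ls ∧ r pq.1 pq.2}.ncard : ℝ) ≤
        Ls.card * Real.sqrt Ps.card + Ps.card) := by
  constructor
  · exact key_incidence r hlin Ps Ls
  · have hlin' : ∀ l l' : L, l ≠ l' → ∀ p q : P,
        (fun l p => r p l) l p → (fun l p => r p l) l' p →
        (fun l p => r p l) l q → (fun l p => r p l) l' q → p = q := by
      intro l l' hne p q hpl hpl' hql hql'
      by_contra hpq
      exact hne (hlin p q hpq l l' hpl hql hpl' hql')
    have hkey := key_incidence (fun l p => r p l) hlin' Ls Ps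
    have hswap : {pq : P × L | pq.1 ∈ Ps ∧ pq.2 ∈ Ls ∧ r pq.1 pq.2}.ncard
        = {lp : L × P | lp.1 ∈ Ls ∧ lp.2 ∈ Ps ∧ r lp.2 lp.1}.ncard := by
      rw [show {lp : L × P | lp.1 ∈ Ls ∧ lp.2 ∈ Ps ∧ r lp.2 lp.1}
          = Prod.swap '' {pq : P × L | pq.1 ∈ Ps ∧ pq.2 ∈ Ls ∧ r pq.1 pq.2} by
        ext ⟨l, p⟩
        constructor
        · rintro ⟨h1, h2, h3⟩
          exact ⟨(p, l), ⟨h2, h1, h3⟩, rfl⟩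
        · rintro ⟨⟨p', l'⟩, ⟨h1, h2, h3⟩, heq⟩
          rw [Prod.swap_prod_mk] at heq
          injection heq with e1 e2
          subst e1; subst e2
          exact ⟨h2, h1, h3⟩]
      rw [Set.ncard_image_of_injective _ Prod.swap_injective]
    rw [hswap]
    exact hkey
end

section
/- In a finite projective plane of order q, let X be a set of lines none of which passes through a fixed point Q, and let Y be a set of points such that every line of X is incident with at least q + 1 − t points of Y, where t < q. If |X| − 1 < (q − t)², then |Y| ≥ |X|. (This is the Hall-condition verification in Step 3 of the probabilistic argument.) -/
theorem stmt_14 (P L : Type*) [Membership P L] [Configuration.ProjectivePlane P L]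
    [Fintype P] [Fintype L] (Q : P) (t : ℕ)
    (ht : t < Configuration.ProjectivePlane.order P L)
    (X : Finset L) (hQ : ∀ l ∈ X, Q ∉ l)
    (Y : Finset P)
    (hinc : ∀ l ∈ X,
      Configuration.ProjectivePlane.order P L + 1 - t ≤
        {p : P | p ∈ Y ∧ p ∈ l}.ncard)
    (hX : X.card - 1 < (Configuration.ProjectivePlane.order P L - t) ^ 2) :
    X.card ≤ Y.card := by
  classical
  set q := Configuration.ProjectivePlane.order P L with hq
  by_contra hcon
  push_neg at hcon
  set s := q - t with hs
  have hs1 : 1 ≤ s := by omega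
  have hqts : q + 1 - t = s + 1 := by omega
  set d : P → ℕ := fun p => (X.filter (fun l => p ∈ l)).card with hd
  set I : ℕ := ∑ l ∈ X, (Y.filter (fun p => p ∈ l)).card with hI
  -- incidence lower bound
  have h1 : (s + 1) * X.card ≤ I := by
    calc (s + 1) * X.card = ∑ _l ∈ X, (s + 1) := by rw [Finset.sum_const, smul_eq_mul]; ring
    _ ≤ I := by
      apply Finset.sum_le_sum
      intro l hl
      have h := hinc l hl
      rw [hqts] at h
      have hset : {p : P | p ∈ Y ∧ p ∈ l} = ↑(Y.filter (fun p => p ∈ l)) := by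
        ext p; simp
      rwa [hset, Set.ncard_coe_finset] at h
  -- double counting
  have h2 : I = ∑ p ∈ Y, d p := by
    simp only [hI, hd, Finset.card_filter]
    rw [Finset.sum_comm]
  -- helper: k^2 = k*(k-1) + k
  have hsq : ∀ k : ℕ, k ^ 2 = k * (k - 1) + k := by
    intro k; cases k with
    | zero => simp
    | succ n => simp only [Nat.succ_sub_one]; ring
  have hmm : ∀ k : ℕ, k * k - k = k * (k - 1) := by
    intro k; cases k with
    | zero => simp
    | succ n => simp only [Nat.succ_sub_one]; ring_nf; omega
  -- pairs bound
  have h3 : ∑ p ∈ Y, d p * (d p - 1) ≤ X.card * (X.card - 1) := by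
    have step1 : ∀ p : P, d p * (d p - 1) =
        ∑ ll ∈ X.offDiag, (if p ∈ ll.1 ∧ p ∈ ll.2 then 1 else 0) := by
      intro p
      rw [← Finset.card_filter]
      have heq : X.offDiag.filter (fun ll : L × L => p ∈ ll.1 ∧ p ∈ ll.2)
          = (X.filter (fun l => p ∈ l)).offDiag := by
        ext ⟨a, b⟩
        simp only [Finset.mem_filter, Finset.mem_offDiag]
        tauto
      rw [heq, Finset.offDiag_card, hmm]
    calc ∑ p ∈ Y, d p * (d p - 1)
        = ∑ p ∈ Y, ∑ ll ∈ X.offDiag, (if p ∈ ll.1 ∧ p ∈ ll.2 then 1 else 0) :=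
          Finset.sum_congr rfl fun p _ => step1 p
      _ = ∑ ll ∈ X.offDiag, ∑ p ∈ Y, (if p ∈ ll.1 ∧ p ∈ ll.2 then 1 else 0) :=
          Finset.sum_comm
      _ ≤ ∑ _ll ∈ X.offDiag, 1 := by
          apply Finset.sum_le_sum
          rintro ⟨l1, l2⟩ hll
          rw [Finset.mem_offDiag] at hll
          rw [← Finset.card_filter]
          apply Finset.card_le_one.mpr
          intro a ha b hb
          simp only [Finset.mem_filter] at ha hb
          exact (Configuration.Nondegenerate.eq_or_eq ha.2.1 hb.2.1 ha.2.2 hb.2.2).resolve_right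
            hll.2.2
      _ = X.offDiag.card := by simp
      _ = X.card * (X.card - 1) := by rw [Finset.offDiag_card, hmm]
  -- Cauchy-Schwarz
  have h4 : I ^ 2 ≤ Y.card * ∑ p ∈ Y, d p ^ 2 := by
    rw [h2]
    have := Finset.sum_mul_sq_le_sq_mul_sq (R := ℕ) Y d 1
    simpa [mul_comm] using this
  -- combine
  have h5 : ∑ p ∈ Y, d p ^ 2 ≤ X.card * (X.card - 1) + I := by
    calc ∑ p ∈ Y, d p ^ 2 = ∑ p ∈ Y, (d p * (d p - 1) + d p) :=
          Finset.sum_congr rfl fun p _ => hsq (d p)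
      _ = (∑ p ∈ Y, d p * (d p - 1)) + ∑ p ∈ Y, d p := Finset.sum_add_distrib
      _ ≤ X.card * (X.card - 1) + I := by rw [← h2]; exact Nat.add_le_add_right h3 _
  -- final arithmetic contradiction
  obtain ⟨e, hne⟩ : ∃ e, X.card = e + 1 := ⟨X.card - 1, by omega⟩
  have hme : Y.card ≤ e := by omega
  have hes : e + 1 ≤ s ^ 2 := by rw [hne] at hX; simp at hX; omega
  rw [hne] at h1
  have h6 : I ^ 2 ≤ e * ((e + 1) * e) + e * I := by
    calc I ^ 2 ≤ Y.card * ((e + 1) * e + I) := by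
          refine le_trans h4 ?_
          apply Nat.mul_le_mul_left
          rw [hne] at h5; simpa using h5
      _ ≤ e * ((e + 1) * e + I) := Nat.mul_le_mul_right _ hme
      _ = e * ((e + 1) * e) + e * I := by ring
  have hA : I * ((s + 1) * (e + 1)) ≤ I * I := Nat.mul_le_mul_left I h1
  have hB : ((s + 1) * (e + 1)) * (s * (e + 1)) ≤ I * (s * (e + 1)) :=
    Nat.mul_le_mul_right _ h1
  have hC : (e + 1) * ((e + 1) * (e + 1)) ≤ s ^ 2 * ((e + 1) * (e + 1)) :=
    Nat.mul_le_mul_right _ hes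
  nlinarith [h1, h6, hA, hB, hC, hs1]
end

section
/- Let v = q² + q + 1 with q ≡ 1 (mod 3), so 3 | v. Let D ⊆ Z_v be a (v, q+1, 1)-difference set. Color each x ∈ Z_v by x mod (v/3). Then this coloring uses exactly v/3 colors, each color class has exactly 3 elements, and every translate D + g contains two distinct elements of the same color. Consequently the balanced upper chromatic number of the cyclic plane satisfies χ̄_b = (q²+q+1)/3 when q ≡ 1 (mod 3). -/
theorem stmt_17 (q v : ℕ) (hq : q % 3 = 1) (hv : v = q ^ 2 + q + 1)
    (D : Finset (ZMod v)) (hD : D.card = q + 1)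
    (hdiff : ∀ x : ZMod v, x ≠ 0 →
      ∃! p : ZMod v × ZMod v, p.1 ∈ D ∧ p.2 ∈ D ∧ p.1 - p.2 = x) :
    (Set.range fun x : ZMod v => x.val % (v / 3)).ncard = v / 3 ∧
    (∀ c : ℕ, c < v / 3 → {x : ZMod v | x.val % (v / 3) = c}.ncard = 3) ∧
    (∀ g : ZMod v, ∃ a b, a ∈ D ∧ b ∈ D ∧ a ≠ b ∧
      (a + g).val % (v / 3) = (b + g).val % (v / 3)) := by
  obtain ⟨k, hk⟩ : ∃ k, q = 3 * k + 1 := ⟨q / 3, by omega⟩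
  have hvk : v = 9 * k ^ 2 + 9 * k + 3 := by subst hv hk; ring
  set m := v / 3 with hm
  have hmk : m = 3 * k ^ 2 + 3 * k + 1 := by omega
  have hv3 : v = 3 * m := by omega
  have hmpos : 0 < m := by omega
  haveI : NeZero v := ⟨by omega⟩
  have hvallt : ∀ x : ZMod v, x.val < v := fun x => ZMod.val_lt x
  have hcast : ∀ n : ℕ, n < v → ((n : ZMod v)).val = n := fun n hn =>
    ZMod.val_cast_of_lt hn
  refine ⟨?_, ?_, ?_⟩
  · have h1 : (Set.range fun x : ZMod v => x.val % m) = ↑(Finset.range m) := by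
      ext c
      simp only [Set.mem_range, Finset.coe_range, Set.mem_Iio]
      constructor
      · rintro ⟨x, rfl⟩; exact Nat.mod_lt _ hmpos
      · intro hc
        refine ⟨(c : ZMod v), ?_⟩
        rw [hcast c (by omega)]
        exact Nat.mod_eq_of_lt hc
    rw [h1, Set.ncard_coe_finset, Finset.card_range]
  · intro c hc
    have key : {x : ZMod v | x.val % m = c} =
        ↑({(c : ZMod v), ((c + m : ℕ) : ZMod v), ((c + 2 * m : ℕ) : ZMod v)} :
          Finset (ZMod v)) := by
      ext x
      simp only [Set.mem_setOf_eq, Finset.coe_insert, Set.mem_insert_iff,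
        Finset.coe_singleton, Set.mem_singleton_iff]
      constructor
      · intro hx
        have h0 := Nat.div_add_mod x.val m
        have hxv := hvallt x
        have hd3 : x.val / m < 3 := Nat.div_lt_of_lt_mul (by omega)
        obtain ⟨d, hd⟩ : ∃ d, x.val / m = d := ⟨_, rfl⟩
        rw [hd] at hd3 h0
        have hd' : d = 0 ∨ d = 1 ∨ d = 2 := by omega
        have hxval : x.val = c ∨ x.val = c + m ∨ x.val = c + 2 * m := by
          rcases hd' with h | h | h
          · rw [h, Nat.mul_zero, Nat.zero_add] at h0; omega
          · rw [h, Nat.mul_one] at h0; omega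
          · rw [h] at h0; omega
        rcases hxval with h | h | h
        · left; rw [← h, ZMod.natCast_val, ZMod.cast_id]
        · right; left; rw [← h, ZMod.natCast_val, ZMod.cast_id]
        · right; right; rw [← h, ZMod.natCast_val, ZMod.cast_id]
      · rintro (rfl | rfl | rfl)
        · rw [hcast c (by omega)]; exact Nat.mod_eq_of_lt hc
        · rw [hcast _ (by omega), Nat.add_mod_right]; exact Nat.mod_eq_of_lt hc
        · rw [hcast _ (by omega), mul_comm, Nat.add_mul_mod_self_left]
          exact Nat.mod_eq_of_lt hc
    rw [key, Set.ncard_coe_finset]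
    have h1 : (c : ZMod v) ≠ ((c + m : ℕ) : ZMod v) := by
      intro h
      have := congrArg ZMod.val h
      rw [hcast c (by omega), hcast _ (by omega)] at this
      omega
    have h2 : (c : ZMod v) ≠ ((c + 2 * m : ℕ) : ZMod v) := by
      intro h
      have := congrArg ZMod.val h
      rw [hcast c (by omega), hcast _ (by omega)] at this
      omega
    have h3 : ((c + m : ℕ) : ZMod v) ≠ ((c + 2 * m : ℕ) : ZMod v) := by
      intro h
      have := congrArg ZMod.val h
      rw [hcast _ (by omega), hcast _ (by omega)] at this
      omega
    rw [Finset.card_insert_of_notMem (by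
        simp only [Finset.mem_insert, Finset.mem_singleton]
        push_neg
        exact ⟨h1, h2⟩),
      Finset.card_insert_of_notMem (by
        simp only [Finset.mem_singleton]; exact h3), Finset.card_singleton]
  · intro g
    have htne : ((m : ℕ) : ZMod v) ≠ 0 := by
      intro h
      have := congrArg ZMod.val h
      rw [hcast m (by omega), ZMod.val_zero] at this
      omega
    obtain ⟨⟨a, b⟩, ⟨ha, hb, hab⟩, -⟩ := hdiff _ htne
    refine ⟨a, b, ha, hb, ?_, ?_⟩
    · intro h; rw [h, sub_self] at hab; exact htne hab.symm
    · have hab' : a + g = (b + g) + (m : ZMod v) := by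
        have : a = b + (m : ZMod v) := by linear_combination hab
        rw [this]; ring
      rw [hab', ZMod.val_add, hcast m (by omega)]
      rw [Nat.mod_mod_of_dvd _ ⟨3, by omega⟩, Nat.add_mod_right]
end
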